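/- For all positive integers r < k, the limit s(k,r) = lim_{n→∞} S(n,k,r)/n^r equals s([0,1],k,r), the infimum of λ(C) over all Lebesgue measurable covering (k−r)-insertion codes C ⊆ [0,1]^r. -/

import Mathlib

open MeasureTheory Filter Topology ENNReal

/-- `x` covers `a` if `x` is a subsequence of `a`. -/
def Covers {X : Type*} {r k : ℕ} (x : Fin r → X) (a : Fin k → X) : Prop :=
  ∃ g : Fin r → Fin k, StrictMono g ∧ ∀ i, a (g i) = x i

/-- `C ⊆ X^r` is a covering `(k-r)`-insertion code over `X`: every sequence in `X^k`
is covered by some sequence in `C`. -/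
def IsCoveringCode {X : Type*} (r k : ℕ) (C : Set (Fin r → X)) : Prop :=
  ∀ a : Fin k → X, ∃ x ∈ C, Covers x a

/-- Minimum size of a covering `(k-r)`-insertion code over the alphabet `[n]`. -/
noncomputable def covNum (n k r : ℕ) : ℕ :=
  sInf {m | ∃ C : Finset (Fin r → Fin n), IsCoveringCode r k (↑C : Set (Fin r → Fin n)) ∧ C.card = m}

/-- The unit cube `[0,1]^r`. -/
def unitCube (r : ℕ) : Set (Fin r → ℝ) := {x | ∀ i, x i ∈ Set.Icc (0 : ℝ) 1}

/-- `C ⊆ [0,1]^r` covers `[0,1]^k`. -/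
def CoversCube (r k : ℕ) (C : Set (Fin r → ℝ)) : Prop :=
  ∀ a ∈ unitCube k, ∃ x ∈ C, Covers x a

/-- Delete the `i`-th coordinate of a length `r+1` sequence. -/
def deleteAt {X : Type*} {r : ℕ} (i : Fin (r + 1)) (x : Fin (r + 1) → X) : Fin r → X :=
  x ∘ i.succAbove

/-- `extSet C i` is the set `C_i` of sequences in `X^{r+1}` whose subsequence obtained by
deleting the `i`-th coordinate belongs to `C`. -/
def extSet {X : Type*} {r : ℕ} (C : Set (Fin r → X)) (i : Fin (r + 1)) :
    Set (Fin (r + 1) → X) :=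
  {x | deleteAt i x ∈ C}

/-- A set of sequences is symmetric if it is closed under permuting the coordinates. -/
def IsSymmetric {X : Type*} {k : ℕ} (M : Set (Fin k → X)) : Prop :=
  ∀ x ∈ M, ∀ σ : Equiv.Perm (Fin k), x ∘ σ ∈ M

/-- The symmetric closure of a set of sequences. -/
def SymClosure {X : Type*} {k : ℕ} (M : Set (Fin k → X)) : Set (Fin k → X) :=
  {x | ∃ σ : Equiv.Perm (Fin k), x ∘ σ ∈ M}

/-- A Turán `(n,k,r)`-system: a family of `r`-element subsets of `[n]` such that every
`k`-element subset of `[n]` contains a member of the family. -/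
def IsTuranSystem (n k r : ℕ) (F : Finset (Finset (Fin n))) : Prop :=
  (∀ A ∈ F, A.card = r) ∧ ∀ K : Finset (Fin n), K.card = k → ∃ A ∈ F, A ⊆ K

/-- Minimum size of a Turán `(n,k,r)`-system. -/
noncomputable def turanNum (n k r : ℕ) : ℕ :=
  sInf {m | ∃ F : Finset (Finset (Fin n)), IsTuranSystem n k r F ∧ F.card = m}


/-! ### Auxiliary lemmas -/

lemma unitCube_eq' (m : ℕ) : unitCube m = Set.pi Set.univ (fun _ => Set.Icc (0:ℝ) 1) := by
  ext x; simp only [unitCube, Set.mem_setOf_eq, Set.mem_pi, Set.mem_univ, forall_true_left]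

noncomputable def nu : Measure ℝ := (volume : Measure ℝ).restrict (Set.Icc 0 1)

instance : IsProbabilityMeasure nu :=
  ⟨by rw [nu, Measure.restrict_apply MeasurableSet.univ, Set.univ_inter, Real.volume_Icc]; norm_num⟩

lemma measurableSet_unitCube' (m : ℕ) : MeasurableSet (unitCube m) := by
  rw [unitCube_eq']
  exact MeasurableSet.univ_pi fun _ => measurableSet_Icc

lemma volume_unitCube' (m : ℕ) : volume (unitCube m) = 1 := by
  rw [unitCube_eq', volume_pi_pi]
  simp [Real.volume_Icc]

lemma pi_nu_eq (m : ℕ) :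
    Measure.pi (fun _ : Fin m => nu) = (volume : Measure (Fin m → ℝ)).restrict (unitCube m) := by
  refine Measure.pi_eq fun s hs => ?_
  rw [Measure.restrict_apply (MeasurableSet.univ_pi hs), unitCube_eq', ← Set.pi_inter_distrib,
    volume_pi_pi]
  simp_rw [nu, Measure.restrict_apply (hs _)]

lemma marginal_map {n r : ℕ} (ν : Measure ℝ) [IsProbabilityMeasure ν]
    {y : Fin r → Fin n} (hy : Function.Injective y) :
    (Measure.pi fun _ : Fin n => ν).map (fun t => t ∘ y) = Measure.pi fun _ : Fin r => ν := by
  classical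
  set S : Set (Fin n) := Set.range y with hS
  let e : {a // a ∈ S} ⊕ {a // a ∉ S} ≃ Fin n := Equiv.sumCompl (· ∈ S)
  let e₂ : Fin r ≃ S := Equiv.ofInjective y hy
  let F1 := (MeasurableEquiv.piCongrLeft (fun _ : Fin n => ℝ) e).symm
  let F2 := MeasurableEquiv.sumPiEquivProdPi (fun _ : {a // a ∈ S} ⊕ {a // a ∉ S} => ℝ)
  let F4 := (MeasurableEquiv.piCongrLeft (fun _ : S => ℝ) e₂).symm
  have h1 : MeasurePreserving F1 (Measure.pi fun _ : Fin n => ν)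
      (Measure.pi fun _ : {a // a ∈ S} ⊕ {a // a ∉ S} => ν) :=
    (measurePreserving_piCongrLeft (fun _ : Fin n => ν) e).symm _
  have h2 : MeasurePreserving F2
      (Measure.pi fun _ : {a // a ∈ S} ⊕ {a // a ∉ S} => ν)
      ((Measure.pi fun _ : S => ν).prod (Measure.pi fun _ : {a // a ∉ S} => ν)) :=
    measurePreserving_sumPiEquivProdPi (fun _ => ν)
  have h3 : MeasurePreserving (Prod.fst : ((S → ℝ) × ({a // a ∉ S} → ℝ)) → (S → ℝ))
      ((Measure.pi fun _ : S => ν).prod (Measure.pi fun _ : {a // a ∉ S} => ν))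
      (Measure.pi fun _ : S => ν) :=
    ⟨measurable_fst, Measure.fst_prod⟩
  have h4 : MeasurePreserving F4 (Measure.pi fun _ : S => ν) (Measure.pi fun _ : Fin r => ν) :=
    (measurePreserving_piCongrLeft (fun _ : S => ν) e₂).symm _
  have hcomp : (fun t : Fin n → ℝ => t ∘ y) = F4 ∘ Prod.fst ∘ F2 ∘ F1 := by
    funext t
    ext i
    show t (y i) = _
    simp [F4, F2, F1, MeasurableEquiv.piCongrLeft, MeasurableEquiv.symm,
      MeasurableEquiv.sumPiEquivProdPi, Equiv.piCongrLeft_symm_apply,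
      Equiv.sumPiEquivProdPi, Equiv.ofInjective, Equiv.ofLeftInverse, e, e₂]
  rw [hcomp]
  exact ((h4.comp h3).comp (h2.comp h1)).map_eq

lemma exists_good_code {r k : ℕ} {C : Set (Fin r → ℝ)} (hC : C ⊆ unitCube r)
    (mC : MeasurableSet C) (cov : CoversCube r k C) (n : ℕ) :
    ∃ D : Finset (Fin r → Fin n), IsCoveringCode r k (↑D : Set (Fin r → Fin n)) ∧
      (D.card : ℝ≥0∞) ≤ volume C * (n : ℝ≥0∞) ^ r + ((n ^ r - n.descFactorial r : ℕ) : ℝ≥0∞) := by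
  classical
  set μ := Measure.pi (fun _ : Fin n => nu) with hμ
  have hmeasy : ∀ y : Fin r → Fin n, Measurable fun t : Fin n → ℝ => t ∘ y := fun y =>
    measurable_pi_lambda _ fun i => measurable_pi_apply _
  set A : (Fin r → Fin n) → Set (Fin n → ℝ) := fun y => (fun t => t ∘ y) ⁻¹' C with hA
  have mA : ∀ y, MeasurableSet (A y) := fun y => (hmeasy y) mC
  set D : (Fin n → ℝ) → Finset (Fin r → Fin n) := fun t =>
    Finset.univ.filter (fun y => t ∘ y ∈ C) with hD
  have hcover : ∀ t : Fin n → ℝ, (∀ j, t j ∈ Set.Icc (0:ℝ) 1) →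
      IsCoveringCode r k (↑(D t) : Set (Fin r → Fin n)) := by
    intro t ht a
    obtain ⟨x, hxC, g, hg, hxg⟩ := cov (fun j => t (a j)) (fun j => ht _)
    refine ⟨a ∘ g, ?_, g, hg, fun i => rfl⟩
    have : t ∘ (a ∘ g) = x := funext fun i => hxg i
    simp only [hD, Finset.coe_filter, Set.mem_setOf_eq, Finset.mem_univ, true_and]
    rw [this]; exact hxC
  have hint : ∫⁻ t, ((D t).card : ℝ≥0∞) ∂μ = ∑ y : Fin r → Fin n, μ (A y) := by
    have h1 : ∀ t, ((D t).card : ℝ≥0∞) = ∑ y : Fin r → Fin n, (A y).indicator (fun _ => 1) t := by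
      intro t
      rw [hD]
      rw [Finset.card_filter]
      push_cast
      refine Finset.sum_congr rfl fun y _ => ?_
      by_cases h : t ∘ y ∈ C
      · have h' : t ∈ A y := h
        rw [if_pos h, Set.indicator_of_mem h']
      · have h' : t ∉ A y := h
        rw [if_neg h, Set.indicator_of_notMem h']
    simp_rw [h1]
    rw [lintegral_finset_sum _ fun y _ => (measurable_const.indicator (mA y))]
    refine Finset.sum_congr rfl fun y _ => ?_
    rw [lintegral_indicator (mA y), setLIntegral_const, one_mul]
  have hterm : ∀ y : Fin r → Fin n, μ (A y) ≤ if Function.Injective y then volume C else 1 := by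
    intro y
    by_cases hy : Function.Injective y
    · rw [if_pos hy]
      have : μ (A y) = (μ.map (fun t => t ∘ y)) C := by
        rw [Measure.map_apply (hmeasy y) mC]
      rw [this, hμ, marginal_map nu hy, pi_nu_eq r, Measure.restrict_apply mC,
        Set.inter_eq_self_of_subset_left hC]
    · rw [if_neg hy]
      exact prob_le_one
  have hsum : ∑ y : Fin r → Fin n, μ (A y) ≤
      volume C * (n : ℝ≥0∞) ^ r + ((n ^ r - n.descFactorial r : ℕ) : ℝ≥0∞) := by
    calc ∑ y : Fin r → Fin n, μ (A y)
        ≤ ∑ y : Fin r → Fin n, if Function.Injective y then volume C else 1 :=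
          Finset.sum_le_sum fun y _ => hterm y
      _ = (Finset.univ.filter (fun y : Fin r → Fin n => Function.Injective y)).card • volume C
          + (Finset.univ.filter (fun y : Fin r → Fin n => ¬ Function.Injective y)).card • 1 := by
          rw [Finset.sum_ite]
          simp [Finset.sum_const]
      _ ≤ (n ^ r) • volume C + ((n ^ r - n.descFactorial r : ℕ)) • (1 : ℝ≥0∞) := by
          have hinj : (Finset.univ.filter
              (fun y : Fin r → Fin n => Function.Injective y)).card = n.descFactorial r := by
            rw [← Fintype.card_subtype]
            rw [Fintype.card_congr (Equiv.subtypeInjectiveEquivEmbedding (Fin r) (Fin n))]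
            simp [Fintype.card_embedding_eq]
          have htot : (Finset.univ.filter (fun y : Fin r → Fin n => Function.Injective y)).card
              + (Finset.univ.filter
                (fun y : Fin r → Fin n => ¬ Function.Injective y)).card = n ^ r := by
            rw [Finset.card_filter_add_card_filter_not]
            simp [Fintype.card_fun]
          have hc1 : (Finset.univ.filter
              (fun y : Fin r → Fin n => Function.Injective y)).card ≤ n ^ r := by omega
          have hc2 : (Finset.univ.filter
              (fun y : Fin r → Fin n => ¬ Function.Injective y)).card
              = n ^ r - n.descFactorial r := by omega
          rw [hc2]
          gcongr
      _ = volume C * (n : ℝ≥0∞) ^ r + ((n ^ r - n.descFactorial r : ℕ) : ℝ≥0∞) := by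
          rw [nsmul_eq_mul, nsmul_eq_mul, mul_one, mul_comm]
          push_cast
          ring
  set 𝒮 : Set ℕ := {m | ∃ t : Fin n → ℝ, (∀ j, t j ∈ Set.Icc (0:ℝ) 1) ∧ (D t).card = m} with h𝒮
  have hne : 𝒮.Nonempty := ⟨(D fun _ => 0).card, fun _ => 0, fun j => by norm_num, rfl⟩
  obtain ⟨t₀, ht₀, hcard₀⟩ := Nat.sInf_mem hne
  have hmin : ∀ t : Fin n → ℝ, (∀ j, t j ∈ Set.Icc (0:ℝ) 1) → sInf 𝒮 ≤ (D t).card :=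
    fun t ht => Nat.sInf_le ⟨t, ht, rfl⟩
  have hμcube : μ (unitCube n) = 1 := by
    rw [hμ, pi_nu_eq n, Measure.restrict_apply (measurableSet_unitCube' n), Set.inter_self,
      volume_unitCube']
  have hlow : ((sInf 𝒮 : ℕ) : ℝ≥0∞) ≤ ∫⁻ t, ((D t).card : ℝ≥0∞) ∂μ := by
    calc ((sInf 𝒮 : ℕ) : ℝ≥0∞) = ((sInf 𝒮 : ℕ) : ℝ≥0∞) * μ (unitCube n) := by
          rw [hμcube, mul_one]
      _ = ∫⁻ t, (unitCube n).indicator (fun _ => ((sInf 𝒮 : ℕ) : ℝ≥0∞)) t ∂μ := by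
          rw [lintegral_indicator (measurableSet_unitCube' n), setLIntegral_const]
      _ ≤ ∫⁻ t, ((D t).card : ℝ≥0∞) ∂μ := by
          refine lintegral_mono fun t => ?_
          by_cases ht : t ∈ unitCube n
          · rw [Set.indicator_of_mem ht]
            exact Nat.cast_le.mpr (hmin t ht)
          · rw [Set.indicator_of_notMem ht]
            exact zero_le
  refine ⟨D t₀, hcover t₀ ht₀, ?_⟩
  rw [hcard₀]
  exact hlow.trans (hint ▸ hsum)

lemma exists_min_code (n k r : ℕ) (hrk : r ≤ k) :
    ∃ D : Finset (Fin r → Fin n), IsCoveringCode r k (↑D : Set (Fin r → Fin n)) ∧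
      D.card = covNum n k r := by
  have hne : {m | ∃ C : Finset (Fin r → Fin n),
      IsCoveringCode r k (↑C : Set (Fin r → Fin n)) ∧ C.card = m}.Nonempty := by
    refine ⟨(Finset.univ : Finset (Fin r → Fin n)).card, Finset.univ, fun a => ?_, rfl⟩
    exact ⟨a ∘ Fin.castLE hrk, by simp, Fin.castLE hrk, Fin.strictMono_castLE hrk,
      fun i => rfl⟩
  obtain ⟨D, hD, hc⟩ := Nat.sInf_mem hne
  exact ⟨D, hD, hc⟩

noncomputable def gridI (n : ℕ) (j : Fin n) : Set ℝ :=
  if (j : ℕ) + 1 = n then Set.Icc ((j : ℝ) / n) 1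
  else Set.Ico ((j : ℝ) / n) (((j : ℕ) + 1 : ℝ) / n)

noncomputable def gridC (n : ℕ) (hn : 0 < n) (x : ℝ) : Fin n :=
  ⟨min ⌊(n : ℝ) * x⌋₊ (n - 1), by omega⟩

lemma gridI_subset {n : ℕ} (j : Fin n) : gridI n j ⊆ Set.Icc (0:ℝ) 1 := by
  have hn' : (0:ℝ) < n := by exact_mod_cast j.pos
  have hj0 : (0:ℝ) ≤ (j:ℝ) / n := by positivity
  unfold gridI
  split_ifs with h
  · exact fun x hx => ⟨le_trans hj0 hx.1, hx.2⟩
  · intro x hx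
    refine ⟨le_trans hj0 hx.1, le_trans hx.2.le ?_⟩
    rw [div_le_one hn']
    have : (j:ℕ) + 1 ≤ n := j.2
    exact_mod_cast this

lemma gridI_vol {n : ℕ} (j : Fin n) : volume (gridI n j) = ENNReal.ofReal (1 / n) := by
  have hn' : (0:ℝ) < n := by exact_mod_cast j.pos
  unfold gridI
  split_ifs with h
  · rw [Real.volume_Icc]
    congr 1
    have : ((j:ℕ) : ℝ) + 1 = n := by exact_mod_cast h
    field_simp
    linarith
  · rw [Real.volume_Ico]
    congr 1
    field_simp
    ring

lemma gridI_disjoint {n : ℕ} {j j' : Fin n} (h : j ≠ j') :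
    Disjoint (gridI n j) (gridI n j') := by
  have hn' : (0:ℝ) < n := by exact_mod_cast j.pos
  have key : ∀ a b : Fin n, (a:ℕ) < (b:ℕ) → Disjoint (gridI n a) (gridI n b) := by
    intro a b hab
    rw [Set.disjoint_left]
    intro x hxa hxb
    have hb : ((b:ℕ):ℝ) / n ≤ x := by
      unfold gridI at hxb
      split_ifs at hxb with h' <;> exact hxb.1
    have ha : x < (((a:ℕ):ℝ) + 1) / n := by
      unfold gridI at hxa
      have hne : (a:ℕ) + 1 ≠ n := by
        have := b.2; omega
      rw [if_neg hne] at hxa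
      exact hxa.2
    have hab' : ((a:ℕ):ℝ) + 1 ≤ ((b:ℕ):ℝ) := by exact_mod_cast hab
    have : (((a:ℕ):ℝ) + 1) / n ≤ ((b:ℕ):ℝ) / n := by gcongr
    linarith
  rcases lt_or_gt_of_ne (fun hc : (j:ℕ) = (j':ℕ) => h (Fin.ext hc)) with h' | h'
  · exact key j j' h'
  · exact (key j' j h').symm

lemma mem_gridI {n : ℕ} (hn : 0 < n) (x : ℝ) (hx : x ∈ Set.Icc (0:ℝ) 1) :
    x ∈ gridI n (gridC n hn x) := by
  have hn' : (0:ℝ) < n := by exact_mod_cast hn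
  set f := ⌊(n : ℝ) * x⌋₊ with hf
  have hxf : (f : ℝ) ≤ n * x := Nat.floor_le (by nlinarith [hx.1])
  have hxf' : n * x < f + 1 := Nat.lt_floor_add_one _
  have hcv : (gridC n hn x).1 = min f (n-1) := rfl
  unfold gridI
  split_ifs with h
  · have hc : min f (n-1) = n - 1 := by rw [hcv] at h; omega
    refine ⟨?_, hx.2⟩
    rw [hcv, hc]
    have hfge : n - 1 ≤ f := by omega
    have : ((n-1 : ℕ) : ℝ) ≤ n * x := le_trans (by exact_mod_cast hfge) hxf
    rw [div_le_iff₀ hn']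
    linarith
  · have hc : min f (n-1) = f := by
      rw [hcv] at h; omega
    rw [hcv, hc]
    constructor
    · rw [div_le_iff₀ hn']; linarith
    · rw [lt_div_iff₀ hn']; linarith

lemma exists_continuous_code {r k : ℕ} (hrk : r ≤ k) {n : ℕ} (hn : 0 < n) :
    ∃ C : Set (Fin r → ℝ), C ⊆ unitCube r ∧ MeasurableSet C ∧ CoversCube r k C ∧
      (volume C).toReal = (covNum n k r : ℝ) / (n : ℝ) ^ r := by
  classical
  obtain ⟨D, hD, hDcard⟩ := exists_min_code n k r hrk
  set cell : (Fin r → Fin n) → Set (Fin r → ℝ) := fun y =>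
    Set.pi Set.univ (fun i => gridI n (y i)) with hcell
  have hcellmeas : ∀ y, MeasurableSet (cell y) := by
    intro y
    refine MeasurableSet.univ_pi fun i => ?_
    unfold gridI
    split_ifs <;> [exact measurableSet_Icc; exact measurableSet_Ico]
  refine ⟨⋃ y ∈ D, cell y, ?_, ?_, ?_, ?_⟩
  · intro x hx
    simp only [Set.mem_iUnion] at hx
    obtain ⟨y, _, hy⟩ := hx
    exact fun i => gridI_subset (y i) (hy i (Set.mem_univ i))
  · exact (Set.Finite.measurableSet_biUnion (D.finite_toSet) fun y _ => hcellmeas y)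
  · intro a ha
    obtain ⟨y, hyD, g, hg, hyg⟩ := hD (fun j => gridC n hn (a j))
    refine ⟨a ∘ g, ?_, g, hg, fun i => rfl⟩
    simp only [Set.mem_iUnion]
    refine ⟨y, hyD, fun i _ => ?_⟩
    have h' : gridC n hn (a (g i)) = y i := hyg i
    show (a (g i)) ∈ gridI n (y i)
    rw [← h']
    exact mem_gridI hn _ (ha (g i))
  · have hdisj : (↑D : Set (Fin r → Fin n)).PairwiseDisjoint cell := by
      intro y _ y' _ hyy'
      obtain ⟨i, hi⟩ : ∃ i, y i ≠ y' i := by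
        by_contra hcon
        push_neg at hcon
        exact hyy' (funext hcon)
      refine Set.disjoint_left.mpr fun x hx hx' => ?_
      exact Set.disjoint_left.mp (gridI_disjoint hi) (hx i (Set.mem_univ i))
        (hx' i (Set.mem_univ i))
    rw [measure_biUnion_finset hdisj fun y _ => hcellmeas y]
    have hvol : ∀ y : Fin r → Fin n, volume (cell y) = (ENNReal.ofReal (1 / n)) ^ r := by
      intro y
      rw [hcell]
      rw [volume_pi_pi]
      simp [gridI_vol]
    rw [Finset.sum_congr rfl fun y _ => hvol y, Finset.sum_const, hDcard]
    have h1n : (0:ℝ) ≤ 1 / n := by positivity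
    rw [nsmul_eq_mul, ENNReal.toReal_mul, ← ENNReal.ofReal_pow h1n,
      ENNReal.toReal_ofReal (by positivity)]
    simp only [ENNReal.toReal_natCast]
    rw [div_pow, one_pow, div_eq_mul_inv, div_eq_mul_inv, one_mul]

lemma bad_tendsto (r : ℕ) :
    Tendsto (fun n : ℕ => ((n ^ r - n.descFactorial r : ℕ) : ℝ) / (n : ℝ) ^ r) atTop (𝓝 0) := by
  have key : Tendsto (fun n : ℕ => 1 - ∏ i ∈ Finset.range r, (1 - (i : ℝ) / n)) atTop (𝓝 0) := by
    have h1 : Tendsto (fun n : ℕ => ∏ i ∈ Finset.range r, (1 - (i : ℝ) / n)) atTop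
        (𝓝 (∏ _i ∈ Finset.range r, (1:ℝ))) := by
      refine tendsto_finset_prod _ fun i _ => ?_
      have := (tendsto_const_div_atTop_nhds_zero_nat (i:ℝ)).const_sub 1
      simpa using this
    rw [Finset.prod_const_one] at h1
    have := h1.const_sub 1
    simpa using this
  refine key.congr' ?_
  filter_upwards [eventually_ge_atTop (max r 1)] with n hn
  have hr : r ≤ n := le_trans (le_max_left _ _) hn
  have hn1 : 1 ≤ n := le_trans (le_max_right _ _) hn
  have hn0 : (0:ℝ) < n := by exact_mod_cast hn1
  have hdesc : (n.descFactorial r : ℝ) = ∏ i ∈ Finset.range r, ((n : ℝ) - i) := by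
    rw [Nat.descFactorial_eq_prod_range]
    push_cast
    refine Finset.prod_congr rfl fun i hi => ?_
    have : i ≤ n := le_trans (Finset.mem_range.mp hi).le hr
    push_cast [Nat.cast_sub this]
    ring
  have hcast : ((n ^ r - n.descFactorial r : ℕ) : ℝ) = (n:ℝ) ^ r - n.descFactorial r := by
    push_cast [Nat.cast_sub (Nat.descFactorial_le_pow n r)]
    ring
  rw [eq_comm, hcast, hdesc, sub_div, div_self (by positivity)]
  congr 1
  rw [eq_comm]
  rw [show ((n:ℝ))^r = ∏ _i ∈ Finset.range r, (n:ℝ) by rw [Finset.prod_const, Finset.card_range]]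
  rw [← Finset.prod_div_distrib]
  refine Finset.prod_congr rfl fun i _ => ?_
  field_simp

/-- For positive integers `r < k`, the limit `s(k,r)` of `S(n,k,r)/n^r` equals
the infimum of `λ(C)` over all Lebesgue measurable covering `(k-r)`-insertion codes
`C ⊆ [0,1]^r`. -/
theorem covNum_density_eq_measurable_inf {r k : ℕ} (hr : 0 < r) (hrk : r < k) (s : ℝ)
    (hs : Tendsto (fun n : ℕ => (covNum n k r : ℝ) / (n : ℝ) ^ r) atTop (𝓝 s)) :
    s = sInf {v : ℝ | ∃ C : Set (Fin r → ℝ), C ⊆ unitCube r ∧ MeasurableSet C ∧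
      CoversCube r k C ∧ (volume C).toReal = v} := by
  classical
  set V : Set ℝ := {v : ℝ | ∃ C : Set (Fin r → ℝ), C ⊆ unitCube r ∧ MeasurableSet C ∧
      CoversCube r k C ∧ (volume C).toReal = v} with hV
  have hVne : V.Nonempty := by
    obtain ⟨C, h1, h2, h3, h4⟩ := exists_continuous_code hrk.le (n := 1) one_pos
    exact ⟨_, C, h1, h2, h3, h4⟩
  have hVbdd : BddBelow V := by
    refine ⟨0, fun v hv => ?_⟩
    obtain ⟨C, -, -, -, h4⟩ := hv
    rw [← h4]
    exact ENNReal.toReal_nonneg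
  refine le_antisymm ?_ ?_
  · -- s ≤ sInf V
    refine le_csInf hVne fun v hv => ?_
    obtain ⟨C, hC, mC, cov, rfl⟩ := hv
    have hfin : volume C ≠ ⊤ := by
      refine ne_of_lt (lt_of_le_of_lt (measure_mono hC) ?_)
      rw [volume_unitCube']
      exact ENNReal.one_lt_top
    have hub : ∀ᶠ n : ℕ in atTop, (covNum n k r : ℝ) / (n:ℝ)^r ≤
        (volume C).toReal + ((n ^ r - n.descFactorial r : ℕ) : ℝ) / (n:ℝ)^r := by
      filter_upwards [eventually_ge_atTop 1] with n hn1
      obtain ⟨D, hDcov, hDle⟩ := exists_good_code hC mC cov n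
      have hcovle : covNum n k r ≤ D.card := Nat.sInf_le ⟨D, hDcov, rfl⟩
      have hreal : (D.card : ℝ) ≤
          (volume C).toReal * (n:ℝ)^r + ((n ^ r - n.descFactorial r : ℕ) : ℝ) := by
        have hne2 : volume C * (n:ℝ≥0∞)^r + ((n ^ r - n.descFactorial r : ℕ) : ℝ≥0∞) ≠ ⊤ := by
          refine ENNReal.add_ne_top.mpr ⟨?_, ENNReal.natCast_ne_top _⟩
          exact ENNReal.mul_ne_top hfin (ENNReal.pow_ne_top (ENNReal.natCast_ne_top n))
        have h5 := ENNReal.toReal_mono hne2 hDle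
        rwa [ENNReal.toReal_add (by
            exact ENNReal.mul_ne_top hfin (ENNReal.pow_ne_top (ENNReal.natCast_ne_top n)))
            (ENNReal.natCast_ne_top _), ENNReal.toReal_mul, ENNReal.toReal_pow,
            ENNReal.toReal_natCast, ENNReal.toReal_natCast] at h5
      have hnpos : (0:ℝ) < (n:ℝ)^r := by
        have : (0:ℝ) < (n:ℝ) := by exact_mod_cast hn1
        positivity
      calc (covNum n k r : ℝ) / (n:ℝ)^r
          ≤ ((volume C).toReal * (n:ℝ)^r + ((n ^ r - n.descFactorial r : ℕ) : ℝ)) / (n:ℝ)^r := by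
            have hnum : (covNum n k r : ℝ) ≤
                (volume C).toReal * (n:ℝ)^r + ((n ^ r - n.descFactorial r : ℕ) : ℝ) :=
              le_trans (by exact_mod_cast hcovle) hreal
            gcongr
        _ = (volume C).toReal + ((n ^ r - n.descFactorial r : ℕ) : ℝ) / (n:ℝ)^r := by
            rw [add_div, mul_div_cancel_right₀ _ (ne_of_gt hnpos)]
    have hlim2 : Tendsto (fun n : ℕ => (volume C).toReal +
        ((n ^ r - n.descFactorial r : ℕ) : ℝ) / (n:ℝ)^r) atTop (𝓝 ((volume C).toReal)) := by
      have := (bad_tendsto r).const_add ((volume C).toReal)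
      simpa using this
    exact le_of_tendsto_of_tendsto hs hlim2 hub
  · -- sInf V ≤ s
    refine ge_of_tendsto hs ?_
    filter_upwards [eventually_ge_atTop 1] with n hn
    obtain ⟨C, h1, h2, h3, h4⟩ := exists_continuous_code hrk.le
      (Nat.lt_of_lt_of_le Nat.zero_lt_one hn)
    exact csInf_le hVbdd ⟨C, h1, h2, h3, h4⟩
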